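/- Every group coarse structure E on a subgroup H of an abelian group G can be extended to a group coarse structure E′ on G with E′ restricted to H equal to E. -/

import Mathlib

/-- A *coarse structure* on `X`: every entourage contains the diagonal, and the family
is closed under composition, inversion, and passing to subsets containing the diagonal. -/
def IsCoarseStructure {X : Type*} (E : Set (Set (X × X))) : Prop :=
  (∀ ε ∈ E, ∀ x : X, (x, x) ∈ ε) ∧
  (∀ ε ∈ E, ∀ δ ∈ E, {p : X × X | ∃ z : X, (p.1, z) ∈ ε ∧ (z, p.2) ∈ δ} ∈ E) ∧
  (∀ ε ∈ E, {p : X × X | (p.2, p.1) ∈ ε} ∈ E) ∧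
  (∀ ε ∈ E, ∀ ε' ⊆ ε, (∀ x : X, (x, x) ∈ ε') → ε' ∈ E)

/-- A family `I` of subsets of a group `G` is a *group ideal*. -/
def IsGroupIdeal {G : Type*} [Group G] (I : Set (Set G)) : Prop :=
  (∀ A ∈ I, ∀ B ⊆ A, B ∈ I) ∧
  (∀ A ∈ I, ∀ B ∈ I, A ∪ B ∈ I) ∧
  (∀ A : Set G, A.Finite → A ∈ I) ∧
  (∀ A ∈ I, ∀ B ∈ I, {x : G | ∃ a ∈ A, ∃ b ∈ B, x = a * b⁻¹} ∈ I)

/-- The entourage `ε_A = {(x, g•x) : x ∈ X, g ∈ A}` determined by `A ⊆ G`. -/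
def entourageOf {G X : Type*} [Group G] [MulAction G X] (A : Set G) : Set (X × X) :=
  {p : X × X | ∃ g ∈ A, p.2 = g • p.1}

/-- The coarse structure `E(G, I, X)` induced on a `G`-space `X` by a group ideal `I`:
all diagonal-containing subsets of some `ε_A` with `A ∈ I`, `1 ∈ A`. -/
def actionCoarse (G : Type*) [Group G] (I : Set (Set G)) (X : Type*) [MulAction G X] :
    Set (Set (X × X)) :=
  {ε | (∀ x : X, (x, x) ∈ ε) ∧ ∃ A ∈ I, (1 : G) ∈ A ∧ ε ⊆ entourageOf A}

/-- `E_I`: the coarse structure on `G` induced by the left action of `G` on itself. -/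
def idealCoarse {G : Type*} [Group G] (I : Set (Set G)) : Set (Set (G × G)) :=
  actionCoarse G I G

/-- The ball `B(x, ε)`. -/
def ball {X : Type*} (ε : Set (X × X)) (x : X) : Set X := {y : X | (x, y) ∈ ε}


/-- `f` is a *coarse (bornologous) mapping* from `(X, EX)` to `(Y, EY)`. -/
def IsCoarseMap {X Y : Type*} (EX : Set (Set (X × X))) (EY : Set (Set (Y × Y)))
    (f : X → Y) : Prop :=
  ∀ ε ∈ EX, ∃ δ ∈ EY, ∀ p ∈ ε, (f p.1, f p.2) ∈ δ

/-- The product coarse structure on `X × Y`, with base the componentwise products of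
entourages. -/
def prodCoarse {X Y : Type*} (EX : Set (Set (X × X))) (EY : Set (Set (Y × Y))) :
    Set (Set ((X × Y) × (X × Y))) :=
  {η | (∀ q : X × Y, (q, q) ∈ η) ∧ ∃ ε ∈ EX, ∃ δ ∈ EY,
    η ⊆ {p : (X × Y) × (X × Y) | (p.1.1, p.2.1) ∈ ε ∧ (p.1.2, p.2.2) ∈ δ}}

/-- `(G, E)` is a *coarse group*: the multiplication and inversion are coarse maps. -/
def IsCoarseGroup {G : Type*} [Group G] (E : Set (Set (G × G))) : Prop :=
  IsCoarseMap (prodCoarse E E) E (fun p => p.1 * p.2) ∧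
  IsCoarseMap E E (fun x : G => x⁻¹)

/-- `(G, E)` is a *left coarse group*. -/
def IsLeftCoarseGroup {G : Type*} [Group G] (E : Set (Set (G × G))) : Prop :=
  ∀ ε ∈ E, ∃ ε' ∈ E, ∀ g x y : G, (x, y) ∈ ε → (g * x, g * y) ∈ ε'

/-- `(G, E)` is a *right coarse group*. -/
def IsRightCoarseGroup {G : Type*} [Group G] (E : Set (Set (G × G))) : Prop :=
  ∀ ε ∈ E, ∃ ε' ∈ E, ∀ g x y : G, (x, y) ∈ ε → (x * g, y * g) ∈ ε'

/-- A coarse structure is *connected* if any two points are related by some entourage. -/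
def IsConnectedCoarse {X : Type*} (E : Set (Set (X × X))) : Prop :=
  ∀ x y : X, ∃ ε ∈ E, (x, y) ∈ ε

/-- A group ideal `I` is *invariant* if `⋃_{g ∈ G} g⁻¹ A g ∈ I` for each `A ∈ I`. -/
def IsInvariantIdeal {G : Type*} [Group G] (I : Set (Set G)) : Prop :=
  ∀ A ∈ I, {x : G | ∃ g : G, ∃ a ∈ A, x = g⁻¹ * a * g} ∈ I

/-- The subspace coarse structure induced on a subset `Y ⊆ G`. -/
def restrictCoarse {G : Type*} (E : Set (Set (G × G))) (Y : Set G) :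
    Set (Set (Y × Y)) :=
  {s | ∃ ε ∈ E, s = {p : Y × Y | ((p.1 : G), (p.2 : G)) ∈ ε}}

section aux
variable {K : Type*} [CommGroup K] {E : Set (Set (K × K))}

lemma egcs_diag_mem (hE : IsCoarseStructure E) (hc : IsConnectedCoarse E) :
    {p : K × K | p.1 = p.2} ∈ E := by
  obtain ⟨ε, hε, -⟩ := hc 1 1
  exact hE.2.2.2 ε hε _ (fun p hp => by
    obtain ⟨x, y⟩ := p; cases hp; exact hE.1 ε hε x) (fun x => rfl)

omit [CommGroup K] in
lemma egcs_union_mem (hE : IsCoarseStructure E) (ε : Set (K × K)) (hε : ε ∈ E)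
    (δ : Set (K × K)) (hδ : δ ∈ E) : ε ∪ δ ∈ E := by
  refine hE.2.2.2 _ (hE.2.1 ε hε δ hδ) _ ?_ (fun x => Or.inl (hE.1 ε hε x))
  rintro ⟨x, y⟩ (h | h)
  · exact ⟨y, h, hE.1 δ hδ y⟩
  · exact ⟨x, hE.1 ε hε x, h⟩

lemma egcs_finite_ball (hE : IsCoarseStructure E) (hc : IsConnectedCoarse E)
    {S : Set K} (hS : S.Finite) : ∃ ε ∈ E, ∀ h ∈ S, ((1 : K), h) ∈ ε := by
  refine Set.Finite.induction_on (motive := fun S _ => ∃ ε ∈ E, ∀ h ∈ S, ((1 : K), h) ∈ ε) S hS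
    ⟨_, egcs_diag_mem hE hc, fun h hh => hh.elim⟩ ?_
  rintro a S ha hS ⟨ε, hε, hball⟩
  · obtain ⟨δ, hδ, hab⟩ := hc 1 a
    refine ⟨ε ∪ δ, egcs_union_mem hE ε hε δ hδ, ?_⟩
    rintro h (rfl | hh)
    · exact Or.inr hab
    · exact Or.inl (hball h hh)

lemma egcs_inv_ball (hgr : IsCoarseGroup E) (ε : Set (K × K)) (hε : ε ∈ E) :
    ∃ δ ∈ E, ∀ h : K, ((1 : K), h) ∈ ε → ((1 : K), h⁻¹) ∈ δ := by
  obtain ⟨δ, hδ, hmap⟩ := hgr.2 ε hε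
  exact ⟨δ, hδ, fun h hh => by simpa using hmap (1, h) hh⟩

lemma egcs_mul_ball (hE : IsCoarseStructure E) (hgr : IsCoarseGroup E)
    (ε : Set (K × K)) (hε : ε ∈ E) (δ : Set (K × K)) (hδ : δ ∈ E) :
    ∃ γ ∈ E, ∀ h k : K, ((1 : K), h) ∈ ε → ((1 : K), k) ∈ δ → ((1 : K), h * k) ∈ γ := by
  obtain ⟨γ, hγ, hmap⟩ := hgr.1
    {p : (K × K) × (K × K) | (p.1.1, p.2.1) ∈ ε ∧ (p.1.2, p.2.2) ∈ δ}
    ⟨fun q => ⟨hE.1 ε hε q.1, hE.1 δ hδ q.2⟩, ε, hε, δ, hδ, Set.Subset.rfl⟩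
  exact ⟨γ, hγ, fun h k hh hk => by simpa using hmap ((1, 1), (h, k)) ⟨hh, hk⟩⟩

lemma egcs_transl_ball (hE : IsCoarseStructure E) (hc : IsConnectedCoarse E)
    (hgr : IsCoarseGroup E) (ε : Set (K × K)) (hε : ε ∈ E) :
    ∃ δ ∈ E, ∀ x h : K, ((1 : K), h) ∈ ε → (x, h * x) ∈ δ := by
  obtain ⟨δ, hδ, hmap⟩ := hgr.1
    {p : (K × K) × (K × K) | (p.1.1, p.2.1) ∈ ε ∧ p.1.2 = p.2.2}
    ⟨fun q => ⟨hE.1 ε hε q.1, rfl⟩, ε, hε, _, egcs_diag_mem hE hc, fun p hp => hp⟩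
  exact ⟨δ, hδ, fun x h hh => by simpa using hmap ((1, x), (h, x)) ⟨hh, rfl⟩⟩

lemma egcs_pair_ball (hE : IsCoarseStructure E) (hgr : IsCoarseGroup E)
    (ε : Set (K × K)) (hε : ε ∈ E) :
    ∃ δ ∈ E, ∀ x y : K, (x, y) ∈ ε → ((1 : K), y * x⁻¹) ∈ δ := by
  obtain ⟨δ₁, hδ₁, hinv⟩ := hgr.2 ε hε
  obtain ⟨δ₂, hδ₂, hmap⟩ := hgr.1
    {p : (K × K) × (K × K) | (p.1.1, p.2.1) ∈ ε ∧ (p.1.2, p.2.2) ∈ δ₁}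
    ⟨fun q => ⟨hE.1 ε hε q.1, hE.1 δ₁ hδ₁ q.2⟩, ε, hε, δ₁, hδ₁, Set.Subset.rfl⟩
  refine ⟨δ₂, hδ₂, fun x y hxy => ?_⟩
  have := hmap ((x, x⁻¹), (y, x⁻¹)) ⟨hxy, hE.1 δ₁ hδ₁ x⁻¹⟩
  simpa using this

end aux

section extend
open scoped Pointwise
variable {G : Type*} [CommGroup G] (H : Subgroup G) (E : Set (Set (H × H)))

/-- Canonical entourage on `G` determined by a finite set `F ⊆ G` and an entourage on `H`. -/
def egcsEnt (F : Set G) (ε : Set (H × H)) : Set (G × G) :=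
  {p : G × G | ∃ f ∈ F, ∃ h : H, ((1 : H), h) ∈ ε ∧ p.2 = f * (h : G) * p.1}

/-- The extended coarse structure on `G`. -/
def egcsE' : Set (Set (G × G)) :=
  {η | (∀ x : G, (x, x) ∈ η) ∧
    ∃ F : Set G, F.Finite ∧ (1 : G) ∈ F ∧ ∃ ε ∈ E, η ⊆ egcsEnt H F ε}

variable {H E}

lemma egcs_Ent_mem (hE : IsCoarseStructure E) {F : Set G} {ε : Set (H × H)}
    (hF : F.Finite) (h1 : (1 : G) ∈ F) (hε : ε ∈ E) : egcsEnt H F ε ∈ egcsE' H E :=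
  ⟨fun x => ⟨1, h1, 1, hE.1 ε hε 1, by simp⟩, F, hF, h1, ε, hε, Set.Subset.rfl⟩

lemma egcs_E'_coarse (hE : IsCoarseStructure E) (hgr : IsCoarseGroup E) :
    IsCoarseStructure (egcsE' H E) := by
  refine ⟨fun ε hε => hε.1, ?_, ?_, ?_⟩
  · rintro η₁ ⟨d₁, F₁, hF₁, h1₁, ε₁, hε₁, hs₁⟩ η₂ ⟨d₂, F₂, hF₂, h1₂, ε₂, hε₂, hs₂⟩
    obtain ⟨γ, hγ, hmul⟩ := egcs_mul_ball hE hgr ε₁ hε₁ ε₂ hε₂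
    refine ⟨fun x => ⟨x, d₁ x, d₂ x⟩, F₁ * F₂, hF₁.mul hF₂,
      (by simpa using Set.mul_mem_mul h1₁ h1₂), γ, hγ, ?_⟩
    rintro ⟨x, z⟩ ⟨y, hy1, hy2⟩
    obtain ⟨f₁, hf₁, h₁, hb₁, he₁⟩ := hs₁ hy1
    obtain ⟨f₂, hf₂, h₂, hb₂, he₂⟩ := hs₂ hy2
    refine ⟨f₁ * f₂, Set.mul_mem_mul hf₁ hf₂, h₁ * h₂, hmul h₁ h₂ hb₁ hb₂, ?_⟩
    simp only at he₁ he₂ ⊢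
    push_cast
    rw [he₂, he₁]
    simp [mul_comm, mul_assoc, mul_left_comm]
  · rintro η ⟨d, F, hF, h1, ε, hε, hs⟩
    obtain ⟨δ, hδ, hinv⟩ := egcs_inv_ball hgr ε hε
    refine ⟨fun x => d x, F⁻¹, hF.inv, Set.mem_inv.2 (by simpa using h1), δ, hδ, ?_⟩
    rintro ⟨x, y⟩ hxy
    obtain ⟨f, hf, h, hb, he⟩ := hs hxy
    refine ⟨f⁻¹, Set.inv_mem_inv.2 hf, h⁻¹, hinv h hb, ?_⟩
    simp only at he ⊢
    push_cast
    rw [he]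
    simp [mul_inv, mul_comm, mul_assoc, mul_left_comm]
  · rintro η ⟨d, F, hF, h1, ε, hε, hs⟩ η' hsub hd
    exact ⟨hd, F, hF, h1, ε, hε, hsub.trans hs⟩

lemma egcs_E'_group (hE : IsCoarseStructure E) (hgr : IsCoarseGroup E) :
    IsCoarseGroup (egcsE' H E) := by
  constructor
  · rintro η ⟨hd, ε₁, ⟨-, F₁, hF₁, h1₁, δ₁, hδ₁, hs₁⟩, ε₂, ⟨-, F₂, hF₂, h1₂, δ₂, hδ₂, hs₂⟩, hsub⟩
    obtain ⟨γ, hγ, hmul⟩ := egcs_mul_ball hE hgr δ₁ hδ₁ δ₂ hδ₂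
    refine ⟨egcsEnt H (F₁ * F₂) γ,
      egcs_Ent_mem hE (hF₁.mul hF₂) (by simpa using Set.mul_mem_mul h1₁ h1₂) hγ, ?_⟩
    rintro ⟨⟨x, y⟩, ⟨x', y'⟩⟩ hp
    obtain ⟨hp₁, hp₂⟩ := hsub hp
    obtain ⟨f₁, hf₁, h₁, hb₁, he₁⟩ := hs₁ hp₁
    obtain ⟨f₂, hf₂, h₂, hb₂, he₂⟩ := hs₂ hp₂
    refine ⟨f₁ * f₂, Set.mul_mem_mul hf₁ hf₂, h₁ * h₂, hmul h₁ h₂ hb₁ hb₂, ?_⟩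
    simp only at he₁ he₂ ⊢
    push_cast
    rw [he₁, he₂]
    simp [mul_comm, mul_assoc, mul_left_comm]
  · rintro η ⟨hd, F, hF, h1, ε, hε, hs⟩
    obtain ⟨δ, hδ, hinv⟩ := egcs_inv_ball hgr ε hε
    refine ⟨egcsEnt H F⁻¹ δ,
      egcs_Ent_mem hE hF.inv (Set.mem_inv.2 (by simpa using h1)) hδ, ?_⟩
    rintro ⟨x, y⟩ hp
    obtain ⟨f, hf, h, hb, he⟩ := hs hp
    refine ⟨f⁻¹, Set.inv_mem_inv.2 hf, h⁻¹, hinv h hb, ?_⟩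
    simp only at he ⊢
    push_cast
    rw [he]
    simp [mul_inv, mul_comm, mul_assoc, mul_left_comm]

end extend


/-- Every group coarse structure `E` on a subgroup `H` of an abelian group `G` extends
to a group coarse structure `E'` on `G` whose restriction to `H` is `E`. -/
theorem extend_group_coarse_structure_abelian {G : Type*} [CommGroup G]
    (H : Subgroup G) (E : Set (Set (H × H)))
    (hE : IsCoarseStructure E) (hc : IsConnectedCoarse E) (hgr : IsCoarseGroup E) :
    ∃ E' : Set (Set (G × G)), IsCoarseStructure E' ∧ IsCoarseGroup E' ∧
      restrictCoarse E' (H : Set G) = E := by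
  refine ⟨egcsE' H E, egcs_E'_coarse hE hgr, egcs_E'_group hE hgr, ?_⟩
  ext s
  constructor
  · rintro ⟨ε', ⟨hd, F, hF, h1F, ε, hε, hsub⟩, rfl⟩
    have hF₀ : ((fun h : H => (h : G)) ⁻¹' F).Finite :=
      hF.preimage (Set.injOn_of_injective Subtype.coe_injective)
    obtain ⟨γ₀, hγ₀, hcov⟩ := egcs_finite_ball hE hc hF₀
    obtain ⟨γ, hγ, hmul⟩ := egcs_mul_ball hE hgr γ₀ hγ₀ ε hε
    obtain ⟨δ, hδ, htr⟩ := egcs_transl_ball hE hc hgr γ hγ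
    refine hE.2.2.2 δ hδ _ ?_ (fun x => hd (x : G))
    rintro ⟨x, y⟩ hp
    obtain ⟨f, hfF, h, hb, he⟩ := hsub hp
    simp only at he
    have hf' : f = ((y * x⁻¹ * h⁻¹ : H) : G) := by
      push_cast
      rw [he]; group
    have hmem : (y * x⁻¹ * h⁻¹ : H) ∈ (fun h : H => (h : G)) ⁻¹' F := by
      simp only [Set.mem_preimage, ← hf']; exact hfF
    have hball : ((1 : H), y * x⁻¹ * h⁻¹ * h) ∈ γ := hmul _ h (hcov _ hmem) hb
    have := htr x (y * x⁻¹ * h⁻¹ * h) hball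
    have hyx : y * x⁻¹ * h⁻¹ * h * x = y := by group
    rwa [hyx] at this
  · intro hs
    obtain ⟨δ, hδ, hpair⟩ := egcs_pair_ball hE hgr s hs
    refine ⟨{p : G × G | p.1 = p.2 ∨ ∃ q ∈ s, p = (((q.1 : H) : G), ((q.2 : H) : G))},
      ⟨fun x => Or.inl rfl, {1}, Set.finite_singleton 1, rfl, δ, hδ, ?_⟩, ?_⟩
    · rintro ⟨x, y⟩ (h | ⟨⟨a, b⟩, hab, heq⟩)
      · exact ⟨1, rfl, 1, hE.1 δ hδ 1, by simpa using h.symm⟩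
      · obtain ⟨h1, h2⟩ := Prod.mk.injEq .. ▸ heq
        refine ⟨1, rfl, b * a⁻¹, hpair a b hab, ?_⟩
        simp only [h1, h2]
        push_cast
        group
    · ext ⟨x, y⟩
      simp only [Set.mem_setOf_eq]
      constructor
      · intro hp
        exact Or.inr ⟨(x, y), hp, rfl⟩
      · rintro (heq | ⟨⟨a, b⟩, hab, heq⟩)
        · have : x = y := Subtype.ext heq
          rw [this]; exact hE.1 s hs y
        · obtain ⟨h1, h2⟩ := Prod.mk.injEq .. ▸ heq
          have hx : x = a := Subtype.ext h1
          have hy : y = b := Subtype.ext h2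
          rw [hx, hy]; exact hab
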